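/- Let h be nonnegative, super-additive, with h(t) ≥ t on (0,1) and h(1/2) > 0. Let f be differentiable on the interior of I with f' integrable on [a,b], a < b. If |f'|^q is h-concave on [a,b] for p, q > 1 with 1/p+1/q = 1, then for each x ∈ [a,b]: |f(x) - (1/(b-a))∫ₐᵇ f(u) du| ≤ (1/(2^{1/q}·(p+1)^{1/p}·h(1/2)^{1/q}))·[((x-a)²/(b-a))·|f'((x+a)/2)| + ((b-x)²/(b-a))·|f'((x+b)/2)|]. -/

import Mathlib

open MeasureTheory

lemma weighted_bound (g : ℝ → ℝ) (K α β p q : ℝ) (hαβ : α ≤ β)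
    (hK : 0 < K) (hp : 1 < p) (hq : 1 < q) (hpq : 1 / p + 1 / q = 1)
    (hgi : IntervalIntegrable g volume α β)
    (hmid : ∀ u ∈ Set.Icc α β,
      K * |g u| ^ q + K * |g (α + β - u)| ^ q ≤ |g ((α + β) / 2)| ^ q) :
    |∫ u in α..β, (u - α) * g u| ≤
      (β - α) ^ 2 / ((p + 1) ^ (1/p) * (2 * K) ^ (1/q)) * |g ((α + β) / 2)| := by
  rcases eq_or_lt_of_le hαβ with rfl | hlt
  · simp
  have hp0 : (0:ℝ) < p := lt_trans zero_lt_one hp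
  have hq0 : (0:ℝ) < q := lt_trans zero_lt_one hq
  set M : ℝ := |g ((α + β) / 2)| with hM
  have hM0 : 0 ≤ M := abs_nonneg _
  set G : ℝ := M ^ q with hG
  have hG0 : 0 ≤ G := Real.rpow_nonneg hM0 q
  -- pointwise bound
  have hpt : ∀ u ∈ Set.Icc α β, |g u| ^ q ≤ G / K := by
    intro u hu
    have h1 := hmid u hu
    have h2 : 0 ≤ K * |g (α + β - u)| ^ q :=
      mul_nonneg hK.le (Real.rpow_nonneg (abs_nonneg _) q)
    rw [le_div_iff₀ hK, mul_comm]
    linarith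
  have hptabs : ∀ u ∈ Set.Icc α β, |g u| ≤ (G / K) ^ (1/q) := by
    intro u hu
    have h2 : (|g u| ^ q) ^ (1/q) ≤ (G / K) ^ (1/q) :=
      Real.rpow_le_rpow (Real.rpow_nonneg (abs_nonneg _) q) (hpt u hu) (by positivity)
    rwa [← Real.rpow_mul (abs_nonneg _), mul_one_div, div_self hq0.ne',
      Real.rpow_one] at h2
  set μ : Measure ℝ := volume.restrict (Set.Ioc α β) with hμ
  haveI : IsFiniteMeasure μ := ⟨by
    rw [hμ, Measure.restrict_apply_univ]; exact measure_Ioc_lt_top⟩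
  have hgm : AEStronglyMeasurable g μ := hgi.1.aestronglyMeasurable
  have habs_m : AEStronglyMeasurable (fun u => |g u|) μ := by
    simpa [Real.norm_eq_abs] using hgm.norm
  have hpow_m : AEStronglyMeasurable (fun u => |g u| ^ q) μ :=
    (Real.continuous_rpow_const hq0.le).comp_aestronglyMeasurable habs_m
  have hpow_int : IntervalIntegrable (fun u => |g u| ^ q) volume α β := by
    rw [intervalIntegrable_iff_integrableOn_Ioc_of_le hαβ]
    refine Integrable.mono' (integrable_const (G / K)) hpow_m ?_
    refine (ae_restrict_iff' measurableSet_Ioc).2 (Filter.Eventually.of_forall ?_)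
    intro u hu
    rw [Real.norm_eq_abs, abs_of_nonneg (Real.rpow_nonneg (abs_nonneg _) q)]
    exact hpt u (Set.Ioc_subset_Icc_self hu)
  have hrefl_int : IntervalIntegrable (fun u => |g (α + β - u)| ^ q) volume α β := by
    have h0 := (hpow_int.comp_sub_left (α + β)).symm
    have e1 : α + β - α = β := by ring
    have e2 : α + β - β = α := by ring
    rw [e1, e2] at h0
    exact h0
  have hint_refl_eq : (∫ u in α..β, |g (α + β - u)| ^ q) = ∫ u in α..β, |g u| ^ q := by
    have := intervalIntegral.integral_comp_sub_left (a := α) (b := β)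
      (fun u => |g u| ^ q) (α + β)
    simpa using this
  have h2K : (0:ℝ) < 2 * K := by linarith
  have hB : (∫ u in α..β, |g u| ^ q) ≤ (β - α) * G / (2 * K) := by
    have hsum : (∫ u in α..β, (K * |g u| ^ q + K * |g (α + β - u)| ^ q))
        ≤ ∫ u in α..β, G := by
      apply intervalIntegral.integral_mono_on hαβ
      · exact (hpow_int.const_mul K).add (hrefl_int.const_mul K)
      · exact intervalIntegrable_const
      · intro u hu; exact hmid u hu
    rw [intervalIntegral.integral_add (hpow_int.const_mul K) (hrefl_int.const_mul K),
      intervalIntegral.integral_const_mul, intervalIntegral.integral_const_mul,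
      hint_refl_eq, intervalIntegral.integral_const, smul_eq_mul] at hsum
    rw [le_div_iff₀ h2K]
    linarith
  -- Hölder
  have hmem1 : MemLp (fun u => u - α) (ENNReal.ofReal p) μ := by
    refine MemLp.of_bound ((continuous_id.sub continuous_const).aestronglyMeasurable) (β - α) ?_
    refine (ae_restrict_iff' measurableSet_Ioc).2 (Filter.Eventually.of_forall fun u hu => ?_)
    rw [Real.norm_eq_abs, abs_of_nonneg (by linarith [hu.1] : (0:ℝ) ≤ u - α)]
    linarith [hu.2]
  have hmem2 : MemLp (fun u => |g u|) (ENNReal.ofReal q) μ := by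
    refine MemLp.of_bound habs_m ((G / K) ^ (1/q)) ?_
    refine (ae_restrict_iff' measurableSet_Ioc).2 (Filter.Eventually.of_forall fun u hu => ?_)
    rw [Real.norm_eq_abs, abs_abs]
    exact hptabs u (Set.Ioc_subset_Icc_self hu)
  have hconj : Real.HolderConjugate p q := Real.holderConjugate_iff.mpr ⟨hp, by rw [← one_div, ← one_div]; exact hpq⟩
  have hnn1 : (0:ℝ→ℝ) ≤ᵐ[μ] fun u => u - α := by
    refine (ae_restrict_iff' measurableSet_Ioc).2 (Filter.Eventually.of_forall fun u hu => ?_)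
    exact sub_nonneg.2 hu.1.le
  have hnn2 : (0:ℝ→ℝ) ≤ᵐ[μ] fun u => |g u| :=
    Filter.Eventually.of_forall fun u => abs_nonneg _
  have holder := integral_mul_le_Lp_mul_Lq_of_nonneg (μ := μ) hconj hnn1 hnn2 hmem1 hmem2
  -- compute the Lp factor
  have hA : (∫ u in α..β, (u - α) ^ p) = (β - α) ^ (p + 1) / (p + 1) := by
    rw [intervalIntegral.integral_comp_sub_right (fun u => u ^ p) α, sub_self,
      integral_rpow (Or.inl (by linarith : (-1:ℝ) < p)),
      Real.zero_rpow (ne_of_gt (by linarith : (0:ℝ) < p + 1))]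
    ring
  have eμ1 : (∫ u, (u - α) ^ p ∂μ) = (β - α) ^ (p+1) / (p+1) := by
    rw [← hA, intervalIntegral.integral_of_le hαβ]
  have eμ2 : (∫ u, |g u| ^ q ∂μ) ≤ (β - α) * G / (2*K) := by
    rw [show (∫ u, |g u| ^ q ∂μ) = ∫ u in α..β, |g u| ^ q from
      (intervalIntegral.integral_of_le hαβ).symm]
    exact hB
  have hμ2nonneg : 0 ≤ ∫ u, |g u| ^ q ∂μ :=
    integral_nonneg fun u => Real.rpow_nonneg (abs_nonneg _) q
  have hc : (0:ℝ) < β - α := by linarith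
  have hp1 : (0:ℝ) < p + 1 := by linarith
  have hAnn : (0:ℝ) ≤ ((β - α) ^ (p+1) / (p+1)) ^ (1/p) :=
    Real.rpow_nonneg (div_nonneg (Real.rpow_nonneg hc.le _) hp1.le) _
  have key : (∫ u, (u - α) * |g u| ∂μ) ≤
      ((β - α) ^ (p+1) / (p+1)) ^ (1/p) * ((β - α) * G / (2*K)) ^ (1/q) := by
    refine holder.trans ?_
    rw [eμ1]
    exact mul_le_mul_of_nonneg_left
      (Real.rpow_le_rpow hμ2nonneg eμ2 (by positivity)) hAnn
  have habs : |∫ u in α..β, (u - α) * g u| ≤ ∫ u, (u - α) * |g u| ∂μ :=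
    calc |∫ u in α..β, (u - α) * g u| ≤ ∫ u in α..β, |(u - α) * g u| :=
        intervalIntegral.abs_integral_le_integral_abs hαβ
      _ = ∫ u in α..β, (u - α) * |g u| := by
        apply intervalIntegral.integral_congr
        intro u hu
        rw [Set.uIcc_of_le hαβ] at hu
        simp only
        rw [abs_mul, abs_of_nonneg (sub_nonneg.2 hu.1)]
      _ = ∫ u, (u - α) * |g u| ∂μ := intervalIntegral.integral_of_le hαβ
  -- final algebra
  have eG : G ^ (1/q) = M := by
    rw [hG, ← Real.rpow_mul hM0, mul_one_div, div_self hq0.ne', Real.rpow_one]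
  have e2 : (β - α) ^ ((p+1) * (1/p)) * (β - α) ^ (1/q) = (β - α) ^ (2:ℕ) := by
    rw [← Real.rpow_add hc, ← Real.rpow_natCast (β - α) 2]
    congr 1
    have h1 : (p+1) * (1/p) = 1 + 1/p := by field_simp
    push_cast
    linarith
  have efinal : ((β - α) ^ (p+1) / (p+1)) ^ (1/p) * ((β - α) * G / (2*K)) ^ (1/q)
      = (β - α) ^ 2 / ((p + 1) ^ (1/p) * (2 * K) ^ (1/q)) * M := by
    rw [Real.div_rpow (Real.rpow_nonneg hc.le _) hp1.le,
        Real.div_rpow (mul_nonneg hc.le hG0) h2K.le,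
        Real.mul_rpow hc.le hG0, eG,
        ← Real.rpow_mul hc.le, div_mul_div_comm, ← mul_assoc, e2]
    ring
  calc |∫ u in α..β, (u - α) * g u| ≤ ∫ u, (u - α) * |g u| ∂μ := habs
    _ ≤ ((β - α) ^ (p+1) / (p+1)) ^ (1/p) * ((β - α) * G / (2*K)) ^ (1/q) := key
    _ = (β - α) ^ 2 / ((p + 1) ^ (1/p) * (2 * K) ^ (1/q)) * M := efinal

theorem ostrowski_h_concave
    (h : ℝ → ℝ) (f f' : ℝ → ℝ) (a b p q : ℝ) (hab : a < b)
    (hp : 1 < p) (hq : 1 < q) (hpq : 1 / p + 1 / q = 1)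
    (hh_nonneg : ∀ t, 0 ≤ t → 0 ≤ h t)
    (hh_superadd : ∀ s t, 0 ≤ s → 0 ≤ t → h s + h t ≤ h (s + t))
    (hh_ge : ∀ t ∈ Set.Ioo (0:ℝ) 1, t ≤ h t)
    (hh_half : 0 < h (1 / 2))
    (hderiv : ∀ y ∈ Set.Icc a b, HasDerivAt f (f' y) y)
    (hint : IntervalIntegrable f' volume a b)
    (hconc : ∀ y ∈ Set.Icc a b, ∀ z ∈ Set.Icc a b, ∀ t ∈ Set.Icc (0:ℝ) 1,
      h t * |f' y| ^ q + h (1 - t) * |f' z| ^ q ≤ |f' (t * y + (1 - t) * z)| ^ q)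
    (x : ℝ) (hx : x ∈ Set.Icc a b) :
    |f x - (1 / (b - a)) * ∫ u in a..b, f u| ≤
      (1 / ((2:ℝ) ^ (1 / q) * (p + 1) ^ (1 / p) * h (1 / 2) ^ (1 / q))) *
        (((x - a) ^ 2 / (b - a)) * |f' ((x + a) / 2)| +
         ((b - x) ^ 2 / (b - a)) * |f' ((x + b) / 2)|) := by
  obtain ⟨hax, hxb⟩ := hx
  set K := h (1/2) with hK
  have hba : (0:ℝ) < b - a := by linarith
  -- integrability of f' on subintervals
  have hsub1 : Set.uIcc a x ⊆ Set.Icc a b := by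
    rw [Set.uIcc_of_le hax]
    exact Set.Icc_subset_Icc le_rfl hxb
  have hsub2 : Set.uIcc x b ⊆ Set.Icc a b := by
    rw [Set.uIcc_of_le hxb]
    exact Set.Icc_subset_Icc hax le_rfl
  have hsub1' : Set.uIcc a x ⊆ Set.uIcc a b := by
    rw [Set.uIcc_of_le hab.le]; exact hsub1
  have hsub2' : Set.uIcc x b ⊆ Set.uIcc a b := by
    rw [Set.uIcc_of_le hab.le]; exact hsub2
  have hint1 : IntervalIntegrable f' volume a x := hint.mono_set hsub1'
  have hint2 : IntervalIntegrable f' volume x b := hint.mono_set hsub2'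
  -- continuity and integrability of f
  have hfc : ContinuousOn f (Set.Icc a b) := fun y hy =>
    (hderiv y hy).continuousAt.continuousWithinAt
  have hfint : IntervalIntegrable f volume a b := by
    apply ContinuousOn.intervalIntegrable
    rwa [Set.uIcc_of_le hab.le]
  have hfint1 : IntervalIntegrable f volume a x := hfint.mono_set hsub1'
  have hfint2 : IntervalIntegrable f volume x b := hfint.mono_set hsub2'
  -- Montgomery identity via integration by parts
  have parts1 : (∫ u in a..x, (u - a) * f' u) = (x - a) * f x - ∫ u in a..x, f u := by
    have := intervalIntegral.integral_mul_deriv_eq_deriv_mul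
      (u := fun t => t - a) (u' := fun _ => (1:ℝ)) (v := f) (v' := f')
      (fun y _ => (hasDerivAt_id y).sub_const a)
      (fun y hy => hderiv y (hsub1 hy))
      intervalIntegrable_const hint1
    simpa using this
  have parts2 : (∫ u in x..b, (u - b) * f' u) = (b - x) * f x - ∫ u in x..b, f u := by
    have := intervalIntegral.integral_mul_deriv_eq_deriv_mul
      (u := fun t => t - b) (u' := fun _ => (1:ℝ)) (v := f) (v' := f')
      (a := x) (b := b)
      (fun y _ => (hasDerivAt_id y).sub_const b)
      (fun y hy => hderiv y (hsub2 hy))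
      intervalIntegrable_const hint2
    simp at this
    rw [this]
    ring
  have hsplit : (∫ u in a..x, f u) + ∫ u in x..b, f u = ∫ u in a..b, f u :=
    intervalIntegral.integral_add_adjacent_intervals hfint1 hfint2
  set I1 := ∫ u in a..x, (u - a) * f' u with hI1
  set I2 := ∫ u in x..b, (u - b) * f' u with hI2
  have hmont : f x - (1 / (b - a)) * ∫ u in a..b, f u = (1 / (b - a)) * (I1 + I2) := by
    rw [parts1, parts2, ← hsplit]
    field_simp
    ring
  -- bound I1
  have hbound1 : |I1| ≤ (x - a) ^ 2 / ((p + 1) ^ (1/p) * (2 * K) ^ (1/q)) * |f' ((x + a) / 2)| := by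
    have hmid1 : ∀ u ∈ Set.Icc a x,
        K * |f' u| ^ q + K * |f' (a + x - u)| ^ q ≤ |f' ((a + x) / 2)| ^ q := by
      intro u hu
      have hu' : u ∈ Set.Icc a b := ⟨hu.1, le_trans hu.2 hxb⟩
      have hu2 : a + x - u ∈ Set.Icc a b :=
        ⟨by linarith [hu.2], by linarith [hu.1]⟩
      have := hconc u hu' (a + x - u) hu2 (1/2) (by norm_num)
      have e : (1/2 : ℝ) * u + (1 - 1/2) * (a + x - u) = (a + x) / 2 := by ring
      rw [e] at this
      convert this using 2 <;> norm_num [hK]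
    have := weighted_bound f' K a x p q hax hh_half hp hq hpq hint1 hmid1
    have e : (a + x) / 2 = (x + a) / 2 := by ring
    rwa [e] at this
  -- bound I2 via reflection
  have hbound2 : |I2| ≤ (b - x) ^ 2 / ((p + 1) ^ (1/p) * (2 * K) ^ (1/q)) * |f' ((x + b) / 2)| := by
    set g₂ : ℝ → ℝ := fun v => -f' (x + b - v) with hg₂
    have hI2eq : I2 = ∫ v in x..b, (v - x) * g₂ v := by
      have := intervalIntegral.integral_comp_sub_left (a := x) (b := b)
        (fun w => (w - b) * f' w) (x + b)
      simp only [add_sub_cancel_right, add_sub_cancel_left] at this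
      rw [hI2, ← this]
      apply intervalIntegral.integral_congr
      intro v _
      simp only [hg₂]
      ring
    have hgi2 : IntervalIntegrable g₂ volume x b := by
      have h0 := (hint2.comp_sub_left (x + b)).symm
      have e1 : x + b - x = b := by ring
      have e2 : x + b - b = x := by ring
      rw [e1, e2] at h0
      exact h0.neg
    have hmid2 : ∀ u ∈ Set.Icc x b,
        K * |g₂ u| ^ q + K * |g₂ (x + b - u)| ^ q ≤ |g₂ ((x + b) / 2)| ^ q := by
      intro u hu
      have hy : x + b - u ∈ Set.Icc a b :=
        ⟨by linarith [hu.2], by linarith [hu.1]⟩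
      have hz : u ∈ Set.Icc a b := ⟨le_trans hax hu.1, hu.2⟩
      have := hconc (x + b - u) hy u hz (1/2) (by norm_num)
      have e : (1/2 : ℝ) * (x + b - u) + (1 - 1/2) * u = (x + b) / 2 := by ring
      rw [e] at this
      simp only [hg₂, abs_neg]
      have e2 : x + b - (x + b - u) = u := by ring
      have e4 : x + b - (x + b) / 2 = (x + b) / 2 := by ring
      rw [e2, e4]
      have e5 : (1:ℝ) - 1/2 = 1/2 := by norm_num
      rw [e5] at this
      rw [hK]
      exact this
    have := weighted_bound g₂ K x b p q hxb hh_half hp hq hpq hgi2 hmid2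
    rw [← hI2eq] at this
    have e3 : |g₂ ((x + b) / 2)| = |f' ((x + b) / 2)| := by
      simp only [hg₂, abs_neg, show x + b - (x + b) / 2 = (x + b) / 2 from by ring]
    rwa [e3] at this
  -- combine
  have h2q : ((2:ℝ) * K) ^ (1/q) = (2:ℝ) ^ (1/q) * K ^ (1/q) :=
    Real.mul_rpow (by norm_num) hh_half.le
  have hpos : (0:ℝ) < (2:ℝ) ^ (1/q) * (p + 1) ^ (1/p) * K ^ (1/q) := by
    have h1 : (0:ℝ) < (2:ℝ) ^ (1/q) := Real.rpow_pos_of_pos (by norm_num) _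
    have h2 : (0:ℝ) < (p + 1) ^ (1/p) := Real.rpow_pos_of_pos (by linarith) _
    have h3 : (0:ℝ) < K ^ (1/q) := Real.rpow_pos_of_pos hh_half _
    positivity
  have hpos2 : (0:ℝ) < (p + 1) ^ (1/p) * ((2:ℝ) * K) ^ (1/q) := by
    have h2 : (0:ℝ) < (p + 1) ^ (1/p) := Real.rpow_pos_of_pos (by linarith) _
    have h3 : (0:ℝ) < ((2:ℝ) * K) ^ (1/q) := Real.rpow_pos_of_pos (by linarith) _
    positivity
  rw [hmont, abs_mul, abs_of_nonneg (by positivity : (0:ℝ) ≤ 1 / (b - a))]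
  calc (1 / (b - a)) * |I1 + I2| ≤ (1 / (b - a)) * (|I1| + |I2|) := by
        apply mul_le_mul_of_nonneg_left (abs_add_le _ _) (by positivity)
    _ ≤ (1 / (b - a)) *
        ((x - a) ^ 2 / ((p + 1) ^ (1/p) * (2 * K) ^ (1/q)) * |f' ((x + a) / 2)| +
         (b - x) ^ 2 / ((p + 1) ^ (1/p) * (2 * K) ^ (1/q)) * |f' ((x + b) / 2)|) := by
        apply mul_le_mul_of_nonneg_left (add_le_add hbound1 hbound2) (by positivity)
    _ = (1 / ((2:ℝ) ^ (1 / q) * (p + 1) ^ (1 / p) * K ^ (1 / q))) *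
        (((x - a) ^ 2 / (b - a)) * |f' ((x + a) / 2)| +
         ((b - x) ^ 2 / (b - a)) * |f' ((x + b) / 2)|) := by
        rw [h2q]
        ring
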